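/- Let f : F₂ⁿ → {−1,1}, let 0 < ε < 1, and let Γ ⊆ F₂ⁿ be a nonempty set that is ε-rare with respect to f. Let γ* ∈ Γ be an element maximizing |f̂(γ)| over γ ∈ Γ. Then |f̂(γ*)| ≤ (∑_{γ ∈ Γ} f̂(γ)⁴)^{1/4} ≤ |f̂(γ*)| + √ε; in particular, the fourth root of the sum of fourth powers of the Fourier coefficients over Γ is √ε-close to the maximum absolute Fourier coefficient in Γ. -/

import Mathlib

/-- The inner product `⟨γ,x⟩ = ∑ i, γ i * x i` over `F₂`. -/
def inner2 {n : ℕ} (γ x : Fin n → ZMod 2) : ZMod 2 := ∑ i, γ i * x i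

/-- The character `χ_γ(x) = (−1)^{⟨γ,x⟩}`. -/
noncomputable def chi {n : ℕ} (γ x : Fin n → ZMod 2) : ℝ :=
  if inner2 γ x = 0 then 1 else -1

/-- The Fourier coefficient `f̂(γ) = 2^{−n} ∑_x f(x)·χ_γ(x)`. -/
noncomputable def fhat {n : ℕ} (f : (Fin n → ZMod 2) → ℝ) (γ : Fin n → ZMod 2) : ℝ :=
  (∑ x, f x * chi γ x) / 2 ^ n

lemma zmod2_cases (a : ZMod 2) : a = 0 ∨ a = 1 := by revert a; decide

lemma inner2_add_left {n : ℕ} (γ₁ γ₂ z : Fin n → ZMod 2) :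
    inner2 (γ₁ + γ₂) z = inner2 γ₁ z + inner2 γ₂ z := by
  simp [inner2, add_mul, Finset.sum_add_distrib]

lemma inner2_add_right {n : ℕ} (γ x y : Fin n → ZMod 2) :
    inner2 γ (x + y) = inner2 γ x + inner2 γ y := by
  simp [inner2, mul_add, Finset.sum_add_distrib]

lemma chi_mul {n : ℕ} (γ x y : Fin n → ZMod 2) :
    chi γ x * chi γ y = chi γ (x + y) := by
  unfold chi
  rw [inner2_add_right]
  have h11 : (1 + 1 : ZMod 2) = 0 := by decide
  rcases zmod2_cases (inner2 γ x) with h1 | h1 <;>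
    rcases zmod2_cases (inner2 γ y) with h2 | h2 <;>
      simp [h1, h2, h11]

lemma sum_chi_ne {n : ℕ} (z : Fin n → ZMod 2) (hz : z ≠ 0) :
    ∑ γ : Fin n → ZMod 2, chi γ z = 0 := by
  obtain ⟨i, hi⟩ := Function.ne_iff.mp hz
  have hzi : z i = 1 := by
    rcases zmod2_cases (z i) with h | h
    · exact absurd h hi
    · exact h
  set e : Fin n → ZMod 2 := Pi.single i 1 with he
  have hie : inner2 e z = 1 := by
    simp [inner2, he, Pi.single_apply, hzi, Finset.sum_ite_eq]
  have key : ∀ γ : Fin n → ZMod 2, chi (γ + e) z = - chi γ z := by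
    intro γ
    unfold chi
    rw [inner2_add_left, hie]
    have h11 : (1 + 1 : ZMod 2) = 0 := by decide
    rcases zmod2_cases (inner2 γ z) with h | h <;> simp [h, h11]
  have hS := Fintype.sum_equiv (Equiv.addRight e)
    (fun γ : Fin n → ZMod 2 => chi (γ + e) z)
    (fun γ : Fin n → ZMod 2 => chi γ z) (fun γ => rfl)
  simp only [key, Finset.sum_neg_distrib] at hS
  linarith

lemma chi_zero {n : ℕ} (γ : Fin n → ZMod 2) : chi γ (0 : Fin n → ZMod 2) = 1 := by
  simp [chi, inner2]

lemma parseval {n : ℕ} (f : (Fin n → ZMod 2) → ℝ) (hf : ∀ x, f x = 1 ∨ f x = -1) :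
    ∑ γ : Fin n → ZMod 2, (fhat f γ) ^ 2 = 1 := by
  have hcard : (Fintype.card (Fin n → ZMod 2) : ℝ) = 2 ^ n := by
    simp [Fintype.card_fun]
  have hfsq : ∀ x, f x * f x = 1 := fun x => by
    rcases hf x with h | h <;> rw [h] <;> norm_num
  have key : ∀ x y : Fin n → ZMod 2,
      ∑ γ : Fin n → ZMod 2, chi γ x * chi γ y = if x = y then (2:ℝ)^n else 0 := by
    intro x y
    simp only [chi_mul]
    by_cases hxy : x = y
    · subst hxy
      have hxx : x + x = 0 := by
        ext i; simp [CharTwo.add_self_eq_zero]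
      rw [hxx, if_pos rfl]
      simp [chi_zero, hcard]
    · rw [if_neg hxy]
      apply sum_chi_ne
      intro h
      apply hxy
      ext i
      have hh := congrFun h i
      simp only [Pi.add_apply, Pi.zero_apply] at hh
      rcases zmod2_cases (x i) with h' | h' <;> rcases zmod2_cases (y i) with h'' | h'' <;>
        simp_all <;> revert hh <;> decide
  have expand : ∑ γ : Fin n → ZMod 2, (∑ x, f x * chi γ x) ^ 2 = (2:ℝ)^n * 2^n := by
    have step : ∀ γ : Fin n → ZMod 2, (∑ x, f x * chi γ x) ^ 2
        = ∑ x, ∑ y, (f x * f y) * (chi γ x * chi γ y) := by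
      intro γ
      rw [sq, Finset.sum_mul_sum]
      exact Finset.sum_congr rfl fun x _ => Finset.sum_congr rfl fun y _ => by ring
    simp_rw [step]
    rw [Finset.sum_comm]
    have inner : ∀ x : Fin n → ZMod 2,
        ∑ γ : Fin n → ZMod 2, ∑ y, (f x * f y) * (chi γ x * chi γ y)
        = (2:ℝ)^n := by
      intro x
      rw [Finset.sum_comm]
      have : ∀ y : Fin n → ZMod 2,
          ∑ γ : Fin n → ZMod 2, (f x * f y) * (chi γ x * chi γ y)
          = if x = y then (2:ℝ)^n else 0 := by
        intro y
        rw [← Finset.mul_sum, key]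
        by_cases h : x = y
        · subst h; simp [hfsq]
        · simp [h]
      simp_rw [this]
      simp
    simp_rw [inner]
    simp [hcard]
  unfold fhat
  simp_rw [div_pow, ← Finset.sum_div]
  rw [expand]
  have h2 : (0:ℝ) < 2 ^ n := by positivity
  field_simp

lemma quarter_pow (b : ℝ) (hb : 0 ≤ b) : (b ^ 4) ^ ((1:ℝ)/4) = b := by
  rw [← Real.rpow_natCast b 4, ← Real.rpow_mul hb]
  norm_num

theorem l4_close_to_max (n : ℕ) (f : (Fin n → ZMod 2) → ℝ) (hf : ∀ x, f x = 1 ∨ f x = -1)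
    (ε : ℝ) (hε0 : 0 < ε) (hε1 : ε < 1)
    (Γ : Finset (Fin n → ZMod 2)) (hΓ : Γ.Nonempty)
    (hrare : ∀ γ₁ ∈ Γ, ∀ γ₂ ∈ Γ, ε < |fhat f γ₁| → ε < |fhat f γ₂| → γ₁ = γ₂)
    (γs : Fin n → ZMod 2) (hγs : γs ∈ Γ)
    (hmax : ∀ γ ∈ Γ, |fhat f γ| ≤ |fhat f γs|) :
    |fhat f γs| ≤ (∑ γ ∈ Γ, fhat f γ ^ 4) ^ ((1 : ℝ) / 4) ∧
      (∑ γ ∈ Γ, fhat f γ ^ 4) ^ ((1 : ℝ) / 4) ≤ |fhat f γs| + Real.sqrt ε := by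
  set a := |fhat f γs| with ha_def
  have ha : 0 ≤ a := abs_nonneg _
  set S := ∑ γ ∈ Γ, fhat f γ ^ 4 with hS_def
  have hterm : ∀ γ ∈ Γ, 0 ≤ fhat f γ ^ 4 := fun γ _ => by positivity
  have hS0 : 0 ≤ S := Finset.sum_nonneg hterm
  have ha4 : fhat f γs ^ 4 = a ^ 4 := by
    rw [ha_def, ← abs_pow, abs_of_nonneg (by positivity)]
  -- lower bound
  have h1 : a ^ 4 ≤ S := by
    rw [← ha4]; exact Finset.single_le_sum hterm hγs
  have hlow : a ≤ S ^ ((1:ℝ)/4) := by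
    calc a = (a ^ 4) ^ ((1:ℝ)/4) := (quarter_pow a ha).symm
    _ ≤ S ^ ((1:ℝ)/4) := Real.rpow_le_rpow (by positivity) h1 (by norm_num)
  -- small coefficients
  have hsmall : ∀ γ ∈ Γ, γ ≠ γs → |fhat f γ| ≤ ε := by
    intro γ hγ hne
    by_contra h
    push_neg at h
    exact hne (hrare γ hγ γs hγs h (lt_of_lt_of_le h (hmax γ hγ)))
  -- Bessel over erase
  have hbessel : ∑ γ ∈ Γ.erase γs, fhat f γ ^ 2 ≤ 1 := by
    rw [← parseval f hf]
    exact Finset.sum_le_sum_of_subset_of_nonneg (Finset.subset_univ _)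
      (fun γ _ _ => by positivity)
  have hup4 : S ≤ a ^ 4 + ε ^ 2 := by
    have hsplit : S = fhat f γs ^ 4 + ∑ γ ∈ Γ.erase γs, fhat f γ ^ 4 :=
      (Finset.add_sum_erase Γ _ hγs).symm
    have htermle : ∀ γ ∈ Γ.erase γs, fhat f γ ^ 4 ≤ ε ^ 2 * fhat f γ ^ 2 := by
      intro γ hγ
      obtain ⟨hne, hγΓ⟩ := Finset.mem_erase.mp hγ
      have h := hsmall γ hγΓ hne
      have h2 : fhat f γ ^ 2 ≤ ε ^ 2 := by
        rw [← sq_abs]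
        exact pow_le_pow_left₀ (abs_nonneg _) h 2
      nlinarith [sq_nonneg (fhat f γ)]
    calc S = fhat f γs ^ 4 + ∑ γ ∈ Γ.erase γs, fhat f γ ^ 4 := hsplit
    _ ≤ a ^ 4 + ∑ γ ∈ Γ.erase γs, ε ^ 2 * fhat f γ ^ 2 := by
        rw [ha4]; gcongr with γ hγ; exact htermle γ hγ
    _ = a ^ 4 + ε ^ 2 * ∑ γ ∈ Γ.erase γs, fhat f γ ^ 2 := by rw [Finset.mul_sum]
    _ ≤ a ^ 4 + ε ^ 2 * 1 := by nlinarith [hbessel, sq_nonneg ε]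
    _ = a ^ 4 + ε ^ 2 := by ring
  set s := Real.sqrt ε with hs_def
  have hs : 0 ≤ s := Real.sqrt_nonneg _
  have hs2 : s ^ 2 = ε := Real.sq_sqrt hε0.le
  have hkey : a ^ 4 + ε ^ 2 ≤ (a + s) ^ 4 := by
    nlinarith [mul_nonneg ha hs, mul_nonneg (mul_nonneg ha ha) hs,
      mul_nonneg ha (mul_nonneg hs hs), sq_nonneg a, sq_nonneg s,
      mul_nonneg (mul_nonneg (mul_nonneg ha ha) ha) hs,
      mul_nonneg ha (mul_nonneg hs (mul_nonneg hs hs)),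
      mul_nonneg (mul_nonneg ha ha) (mul_nonneg hs hs)]
  have hhigh : S ^ ((1:ℝ)/4) ≤ a + s := by
    calc S ^ ((1:ℝ)/4) ≤ ((a + s) ^ 4) ^ ((1:ℝ)/4) :=
      Real.rpow_le_rpow hS0 (le_trans hup4 hkey) (by norm_num)
    _ = a + s := quarter_pow _ (by positivity)
  exact ⟨hlow, hhigh⟩
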